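/- arXiv:1507.06187 — 3 statements merged into one kernel-verified Lean document; each statement's English description precedes it below -/
import Mathlib

section
/- If the edges of the complete graph on ℕ are 2-coloured, then the vertices can be partitioned into two disjoint sets, one of which carries a monochromatic path in colour 0 and the other a monochromatic path in colour 1 (either part may be empty or finite). -/
open Cardinal

universe u

variable {V : Type u}

/-- Two walks between the same endpoints intersect only in the endpoints. -/
def IntDisjoint {G : SimpleGraph V} {v w : V} (p q : G.Walk v w) : Prop :=
  ∀ x, x ∈ p.support → x ∈ q.support → x = v ∨ x = w

/-- `A` is κ-unseparable in `G`: any two distinct vertices of `A` are joined by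
κ-many pairwise internally disjoint finite paths. -/
def Unseparable (G : SimpleGraph V) (A : Set V) (κ : Cardinal.{u}) : Prop :=
  ∀ v ∈ A, ∀ w ∈ A, v ≠ w →
    ∃ P : Set (G.Path v w), κ ≤ #P ∧
      ∀ p ∈ P, ∀ q ∈ P, p ≠ q → IntDisjoint (p : G.Path v w).1 (q : G.Path v w).1

/-- A path in Rado's sense inside the graph `G`: a set of vertices together with a
well-ordering such that the set of earlier neighbours of each vertex is cofinal below it. -/
structure RadoPath (G : SimpleGraph V) where
  verts : Set V
  lt : verts → verts → Prop
  wo : IsWellOrder verts lt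
  cofinal : ∀ v x : verts, lt x v → ∃ w : verts, G.Adj ↑w ↑v ∧ lt w v ∧ ¬ lt w x

/-- The order type of a Rado path. -/
noncomputable def RadoPath.otype {G : SimpleGraph V} (P : RadoPath G) : Ordinal.{u} :=
  @Ordinal.type P.verts P.lt P.wo

/-- `P` is concentrated on `A`: for every limit point `y` of `P` and every `x` below `y`,
the interval `[x, y)` contains a neighbour of `y` lying in `A`. -/
def RadoPath.ConcentratedOn {G : SimpleGraph V} (P : RadoPath G) (A : Set V) : Prop :=
  ∀ y : P.verts, ((∃ x, P.lt x y) ∧ ∀ x, P.lt x y → ∃ z, P.lt x z ∧ P.lt z y) →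
    ∀ x : P.verts, P.lt x y →
      ∃ w : P.verts, (↑w : V) ∈ A ∧ G.Adj ↑w ↑y ∧ ¬ P.lt w x ∧ P.lt w y

/-- The subgraph of `G` consisting of the edges of colour `i`. -/
def colGraph (G : SimpleGraph V) {r : ℕ} (c : Sym2 V → Fin r) (i : Fin r) :
    SimpleGraph V where
  Adj a b := G.Adj a b ∧ c s(a, b) = i
  symm := by
    constructor
    intro a b h
    refine ⟨h.1.symm, ?_⟩
    rw [Sym2.eq_swap]
    exact h.2
  loopless := by constructor; intro a h; exact G.irrefl h.1

/-- The restriction of `G` to the vertices in `S` (as a graph on the same vertex type). -/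
def restrictTo (G : SimpleGraph V) (S : Set V) : SimpleGraph V where
  Adj a b := G.Adj a b ∧ a ∈ S ∧ b ∈ S
  symm := by constructor; intro a b h; exact ⟨h.1.symm, h.2.2, h.2.1⟩
  loopless := by constructor; intro a h; exact G.irrefl h.1

/-- The common neighbourhood `N_G[X] = ⋂_{x ∈ X} N_G(x)`. -/
def commonNbhd (G : SimpleGraph V) (X : Set V) : Set V :=
  {v | ∀ x ∈ X, G.Adj x v}

/-- `G` is κ-complete: it has at least κ vertices and every vertex has fewer than κ
non-neighbours. -/
def KComplete (G : SimpleGraph V) (κ : Cardinal.{u}) : Prop :=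
  κ ≤ #V ∧ ∀ x : V, #{v : V | ¬ G.Adj x v} < κ

/-- `G` is of type `H_{κ,κ}` with decomposition `(A, B)`. -/
def IsHDecomp (G : SimpleGraph V) (κ : Cardinal.{u}) (A B : Set V) : Prop :=
  ∃ a b : Ordinal.{u} → V,
    Set.InjOn a (Set.Iio κ.ord) ∧ Set.InjOn b (Set.Iio κ.ord) ∧
    a '' Set.Iio κ.ord = A ∧ b '' Set.Iio κ.ord = B ∧
    ∀ ξ ζ : Ordinal.{u}, ξ ≤ ζ → ζ < κ.ord → G.Adj (a ξ) (b ζ)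

/-- `G` is of type `H_{κ,κ}` with main class `A`. -/
def IsHType (G : SimpleGraph V) (κ : Cardinal.{u}) (A : Set V) : Prop :=
  ∃ B : Set V, IsHDecomp G κ A B

/-- A finite family of increasing covers, witnessing that a set is (𝒜,κ)-centered. -/
structure CenteredWitness (V : Type u) where
  I : Type
  fin : Finite I
  lam : I → Ordinal.{u}
  fam : I → Ordinal.{u} → Set V

/-- An 𝒜-box: the intersection `⋂_{i ∈ I} A^i_{f i}`. -/
def CenteredWitness.Box (𝒜 : CenteredWitness V) (f : 𝒜.I → Ordinal.{u}) : Set V :=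
  ⋂ i, 𝒜.fam i (f i)

/-- `A` is (𝒜,κ)-centered in `G`. -/
def IsCentered (G : SimpleGraph V) (A : Set V) (𝒜 : CenteredWitness V)
    (κ : Cardinal.{u}) : Prop :=
  (∀ i, ∀ α β : Ordinal.{u}, α ≤ β → β < 𝒜.lam i → 𝒜.fam i α ⊆ 𝒜.fam i β) ∧
  (∀ i, A ⊆ ⋃ α ∈ Set.Iio (𝒜.lam i), 𝒜.fam i α) ∧
  (∀ f : 𝒜.I → Ordinal.{u}, (∀ i, f i < 𝒜.lam i) → κ ≤ #(commonNbhd G (𝒜.Box f)))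

/-- The set `S` carries a (finite or ω-type) path all of whose edges have colour `i`. -/
def CarriesPath {r : ℕ} (c : Sym2 ℕ → Fin r) (i : Fin r) (S : Set ℕ) : Prop :=
  (∃ l : List ℕ, l.Nodup ∧ (↑l.toFinset : Set ℕ) = S ∧
      l.Chain' (fun a b => c s(a, b) = i)) ∨
  (∃ f : ℕ → ℕ, Function.Injective f ∧ Set.range f = S ∧
      ∀ n : ℕ, c s(f n, f (n + 1)) = i)

private lemma fin2_cases (a : Fin 2) : a = 0 ∨ a = 1 := by omega

private lemma fin2_resolve (a i : Fin 2) (h : a ≠ i) : a = 1 - i := by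
  fin_cases a <;> fin_cases i <;> simp_all

private lemma exists_seq (A : ℕ → Set ℕ) (hA : ∀ n, (A n).Infinite) (G : ℕ → ℕ) :
    ∃ E : ℕ → ℕ, (∀ n, E n ∈ A n) ∧ ∀ n, G (E n) < E (n + 1) := by
  have h : ∀ (n x : ℕ), ∃ y, y ∈ A n ∧ x < y := by
    intro n x
    obtain ⟨y, hy, hxy⟩ := (hA n).exists_gt x
    exact ⟨y, hy, hxy⟩
  choose f hf1 hf2 using h
  refine ⟨fun n => Nat.rec (f 0 0) (fun n x => f (n + 1) (G x)) n, ?_, ?_⟩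
  · intro n
    cases n with
    | zero => exact hf1 0 0
    | succ n => exact hf1 _ _
  · intro n
    exact hf2 _ _

private lemma exists_step (c : Sym2 ℕ → Fin 2) (A : Set ℕ) (hA : A.Infinite) (n : ℕ) :
    ∃ (B : Set ℕ) (d : Fin 2), B ⊆ A ∧ B.Infinite ∧ ∀ m ∈ B, n < m ∧ c s(n, m) = d := by
  by_cases h0 : {m | m ∈ A ∧ n < m ∧ c s(n, m) = 0}.Infinite
  · exact ⟨_, 0, fun m hm => hm.1, h0, fun m hm => hm.2⟩
  · refine ⟨{m | m ∈ A ∧ n < m ∧ c s(n, m) = 1}, 1, fun m hm => hm.1, ?_, fun m hm => hm.2⟩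
    have hinf : {m | m ∈ A ∧ n < m}.Infinite := by
      have : {m | m ∈ A ∧ n < m} = A \ Set.Iic n := by
        ext m
        simp only [Set.mem_setOf_eq, Set.mem_diff, Set.mem_Iic, not_le]
      rw [this]
      exact hA.diff (Set.finite_Iic n)
    have hsub : {m | m ∈ A ∧ n < m} ⊆
        {m | m ∈ A ∧ n < m ∧ c s(n, m) = 0} ∪ {m | m ∈ A ∧ n < m ∧ c s(n, m) = 1} := by
      intro m hm
      rcases fin2_cases (c s(n, m)) with h | h
      · exact Or.inl ⟨hm.1, hm.2, h⟩
      · exact Or.inr ⟨hm.1, hm.2, h⟩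
    by_contra hcon
    rw [Set.not_infinite] at h0 hcon
    exact (hinf.mono hsub) (h0.union hcon)

private lemma exists_endhom (c : Sym2 ℕ → Fin 2) :
    ∃ (h t : ℕ → ℕ) (d : ℕ → Fin 2) (i : Fin 2),
      StrictMono h ∧
      (∀ m m', m ∈ Set.range h → m' ∈ Set.range h → m ≠ m' → c s(m, m') = i) ∧
      (∀ v m, m ∈ Set.range h → t v < m → c s(v, m) = d v) := by
  choose F dc hsub hinf hcol using exists_step c
  let S : ℕ → {A : Set ℕ // A.Infinite} := fun n =>
    Nat.rec ⟨Set.univ, Set.infinite_univ⟩ (fun n p => ⟨F p.1 p.2 n, hinf p.1 p.2 n⟩) n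
  have hSsub : ∀ n, (S (n + 1)).1 ⊆ (S n).1 := fun n => hsub (S n).1 (S n).2 n
  have hSchain : ∀ v k, v ≤ k → (S k).1 ⊆ (S v).1 := by
    intro v k hvk
    induction hvk with
    | refl => exact subset_rfl
    | step h ih => exact (hSsub _).trans ih
  set D : ℕ → Fin 2 := fun n => dc (S n).1 (S n).2 n with hD
  have hScol : ∀ n, ∀ m ∈ (S (n + 1)).1, n < m ∧ c s(n, m) = D n :=
    fun n => hcol (S n).1 (S n).2 n
  obtain ⟨g, hg1, hg2⟩ := exists_seq (fun n => (S (n + 1)).1) (fun n => (S (n + 1)).2) id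
  have hgmono : StrictMono g := strictMono_nat_of_lt_succ fun n => hg2 n
  have P1 : ∀ v k, v ≤ k → v < g k ∧ c s(v, g k) = D v := by
    intro v k hvk
    exact hScol v (g k) (hSchain (v + 1) (k + 1) (by omega) (hg1 k))
  have hpig : ∃ i : Fin 2, {k | D (g k) = i}.Infinite := by
    by_contra hcon
    push_neg at hcon
    have h0 := hcon 0
    have h1 := hcon 1
    have : (Set.univ : Set ℕ) ⊆ {k | D (g k) = 0} ∪ {k | D (g k) = 1} := by
      intro k _
      rcases fin2_cases (D (g k)) with h | h
      · exact Or.inl h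
      · exact Or.inr h
    exact Set.infinite_univ (Set.Finite.subset (h0.union h1) this)
  obtain ⟨i, hI⟩ := hpig
  obtain ⟨E, hE1, hE2⟩ := exists_seq (fun _ => {k | D (g k) = i}) (fun _ => hI) g
  have hEmono : StrictMono E := strictMono_nat_of_lt_succ fun n =>
    lt_of_le_of_lt (hgmono.le_apply) (hE2 n)
  refine ⟨fun n => g (E n), g, D, i, hgmono.comp hEmono, ?_, ?_⟩
  · have key : ∀ a b : ℕ, a < b → c s(g (E a), g (E b)) = i := by
      intro a b hab
      have h1 : g (E a) ≤ E b := by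
        have h2 := hE2 a
        have h3 : E (a + 1) ≤ E b := hEmono.monotone (by omega)
        omega
      rw [(P1 (g (E a)) (E b) h1).2]
      exact hE1 a
    rintro m m' ⟨a, rfl⟩ ⟨b, rfl⟩ hne
    rcases lt_trichotomy a b with h | h | h
    · exact key a b h
    · exact absurd (by rw [h]) hne
    · rw [Sym2.eq_swap]; exact key b a h
  · rintro v m ⟨k, rfl⟩ hvm
    have hvm' : g v < g (E k) := hvm
    have hvE : v ≤ E k := by
      by_contra hc
      push_neg at hc
      have := hgmono (show E k < v by omega)
      omega
    exact (P1 v (E k) hvE).2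

private lemma listPath (c : Sym2 ℕ → Fin 2) (j : Fin 2) (b tt : ℕ → ℕ)
    (hb : StrictMono b) (X : Set ℕ)
    (hdisj : ∀ x ∈ X, x ∉ Set.range b)
    (hcol : ∀ x ∈ X, ∀ k, tt x < b k → c s(x, b k) = j) :
    ∀ l : List ℕ, l.Nodup → (∀ x ∈ l, x ∈ X) → ∀ m : ℕ,
      ∃ l' : List ℕ, l'.Nodup ∧ l'.Chain' (fun a b' => c s(a, b') = j) ∧
        (∀ x ∈ l, x ∈ l') ∧ (∀ x ∈ l', x ∈ l ∨ ∃ k, m < k ∧ x = b k) ∧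
        l'.head? = l.head? := by
  intro l
  induction l with
  | nil => exact fun _ _ m => ⟨[], by simp, List.isChain_nil, by simp, by simp, rfl⟩
  | cons x tail ih =>
    intro hnd hmem m
    cases tail with
    | nil =>
      refine ⟨[x], by simp, List.isChain_singleton _, by simp, ?_, rfl⟩
      intro y hy
      simp only [List.mem_singleton] at hy
      exact Or.inl (by simp [hy])
    | cons y tail2 =>
      have hx : x ∈ X := hmem x (by simp)
      have hy : y ∈ X := hmem y (by simp)
      set K := max m (max (tt x) (tt y)) + 1 with hK
      have hbK : K ≤ b K := hb.le_apply
      obtain ⟨l'', h1, h2, h3, h4, h5⟩ := ih hnd.of_cons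
        (fun z hz => hmem z (List.mem_cons_of_mem _ hz)) K
      have hxnb : x ∉ Set.range b := hdisj x hx
      have hbKl : b K ∉ l'' := by
        intro hc
        rcases h4 _ hc with hc' | ⟨k, hk, hk'⟩
        · exact hdisj _ (hmem _ (List.mem_cons_of_mem _ hc')) ⟨K, rfl⟩
        · exact absurd (hb.injective hk') (by omega)
      have hxl : x ∉ l'' := by
        intro hc
        rcases h4 _ hc with hc' | ⟨k, hk, hk'⟩
        · exact (List.nodup_cons.mp hnd).1 hc'
        · exact hxnb ⟨k, hk'.symm⟩
      refine ⟨x :: b K :: l'', ?_, ?_, ?_, ?_, rfl⟩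
      · rw [List.nodup_cons, List.nodup_cons]
        refine ⟨?_, hbKl, h1⟩
        simp only [List.mem_cons]
        rintro (hc | hc)
        · exact hxnb ⟨K, hc.symm⟩
        · exact hxl hc
      · rw [List.Chain', List.isChain_cons]
        constructor
        · intro z hz
          rw [List.head?_cons, Option.mem_some_iff] at hz
          subst hz
          exact hcol x hx K (by omega)
        · rw [List.isChain_cons]
          refine ⟨?_, h2⟩
          intro z hz
          rw [h5] at hz
          rw [List.head?_cons, Option.mem_some_iff] at hz
          subst hz
          rw [Sym2.eq_swap]
          exact hcol y hy K (by omega)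
      · intro z hz
        rcases List.mem_cons.mp hz with rfl | hz'
        · simp
        · simp only [List.mem_cons]
          exact Or.inr (Or.inr (h3 z hz'))
      · intro z hz
        rcases List.mem_cons.mp hz with rfl | hz'
        · exact Or.inl (by simp)
        rcases List.mem_cons.mp hz' with rfl | hz''
        · exact Or.inr ⟨K, by omega, rfl⟩
        rcases h4 z hz'' with hc | ⟨k, hk, hk'⟩
        · exact Or.inl (List.mem_cons_of_mem _ hc)
        · exact Or.inr ⟨k, by omega, hk'⟩

private lemma pathA (c : Sym2 ℕ → Fin 2) (j : Fin 2) (b tt : ℕ → ℕ)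
    (hb : StrictMono b) (X : Set ℕ)
    (hdisj : ∀ x ∈ X, x ∉ Set.range b)
    (hcol : ∀ x ∈ X, ∀ k, tt x < b k → c s(x, b k) = j) :
    ∃ A : Set ℕ, A ⊆ Set.range b ∧ CarriesPath c j (X ∪ A) := by
  rcases X.finite_or_infinite with hX | hX
  · have hmeml : ∀ z, z ∈ hX.toFinset.toList ↔ z ∈ X := by
      intro z
      rw [Finset.mem_toList, Set.Finite.mem_toFinset]
    obtain ⟨l', h1, h2, h3, h4, _⟩ := listPath c j b tt hb X hdisj hcol hX.toFinset.toList
      (Finset.nodup_toList _) (fun z hz => (hmeml z).mp hz) 0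
    refine ⟨{z | z ∈ l' ∧ z ∉ X}, ?_, Or.inl ⟨l', h1, ?_, h2⟩⟩
    · rintro z ⟨hz1, hz2⟩
      rcases h4 z hz1 with hz' | ⟨k, _, rfl⟩
      · exact absurd ((hmeml z).mp hz') hz2
      · exact ⟨k, rfl⟩
    · ext z
      simp only [List.coe_toFinset, Set.mem_setOf_eq, Set.mem_union]
      constructor
      · intro hz
        by_cases hzX : z ∈ X
        · exact Or.inl hzX
        · exact Or.inr ⟨hz, hzX⟩
      · rintro (hz | hz)
        · exact h3 z ((hmeml z).mpr hz)
        · exact hz.1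
  · set x : ℕ → ℕ := fun n => Nat.nth (· ∈ X) n with hxdef
    have hxmem : ∀ n, x n ∈ X := fun n => Nat.nth_mem_of_infinite hX n
    have hxinj : Function.Injective x := Nat.nth_injective hX
    have hxrange : Set.range x = X := Nat.range_nth_of_infinite hX
    set T : ℕ → ℕ := fun n => (Finset.range (n + 2)).sup (fun m => tt (x m)) + n + 1
      with hTdef
    have hTmono : StrictMono T := by
      intro p q hpq
      have hsup : (Finset.range (p + 2)).sup (fun m => tt (x m)) ≤
          (Finset.range (q + 2)).sup (fun m => tt (x m)) :=
        Finset.sup_mono (Finset.range_subset_range.mpr (by omega))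
      simp only [hTdef]
      omega
    have hTgt : ∀ n mi, mi < n + 2 → tt (x mi) < b (T n) := by
      intro n mi hmi
      have h1 : tt (x mi) ≤ (Finset.range (n + 2)).sup (fun m => tt (x m)) :=
        Finset.le_sup (f := fun m => tt (x m)) (Finset.mem_range.mpr hmi)
      have h2 : T n ≤ b (T n) := hb.le_apply
      have h3 : (Finset.range (n + 2)).sup (fun m => tt (x m)) < T n := by
        simp only [hTdef]; omega
      omega
    set a : ℕ → ℕ := fun n => b (T n) with hadef
    have hainj : Function.Injective a := fun p q h => hTmono.injective (hb.injective h)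
    set f : ℕ → ℕ := fun n => if n % 2 = 0 then x (n / 2) else a (n / 2) with hfdef
    have hfeven : ∀ q, f (2 * q) = x q := by
      intro q
      simp only [hfdef]
      rw [if_pos (by omega)]
      congr 1
      omega
    have hfodd : ∀ q, f (2 * q + 1) = a q := by
      intro q
      simp only [hfdef]
      rw [if_neg (by omega)]
      congr 1
      omega
    refine ⟨Set.range a, ?_, Or.inr ⟨f, ?_, ?_, ?_⟩⟩
    · rintro z ⟨n, rfl⟩
      exact ⟨T n, rfl⟩
    · intro p q h
      have hp : p % 2 = 0 ∨ p % 2 = 1 := by omega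
      have hq : q % 2 = 0 ∨ q % 2 = 1 := by omega
      rcases hp with hp | hp <;> rcases hq with hq | hq <;>
        simp only [hfdef, hp, hq, if_pos, if_neg, reduceIte] at h
      · have := hxinj h; omega
      · exact absurd h (fun hc => hdisj _ (hxmem _) ⟨T (q / 2), hc.symm⟩)
      · exact absurd h (fun hc => hdisj _ (hxmem _) ⟨T (p / 2), hc⟩)
      · have := hainj h; omega
    · ext z
      simp only [Set.mem_range, Set.mem_union]
      constructor
      · rintro ⟨n, rfl⟩
        have hn : n % 2 = 0 ∨ n % 2 = 1 := by omega
        rcases hn with hn | hn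
        · simp only [hfdef, hn, reduceIte]
          exact Or.inl (hxmem _)
        · simp only [hfdef, hn, reduceIte]
          exact Or.inr ⟨n / 2, rfl⟩
      · rintro (hz | ⟨n, rfl⟩)
        · obtain ⟨n, rfl⟩ := hxrange ▸ hz
          exact ⟨2 * n, hfeven n⟩
        · exact ⟨2 * n + 1, hfodd n⟩
    · intro n
      have hn : n % 2 = 0 ∨ n % 2 = 1 := by omega
      rcases hn with hn | hn
      · obtain ⟨q, rfl⟩ : ∃ q, n = 2 * q := ⟨n / 2, by omega⟩
        rw [hfeven q, show 2 * q + 1 = 2 * q + 1 from rfl, hfodd q]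
        exact hcol (x q) (hxmem q) (T q) (hTgt q q (by omega))
      · obtain ⟨q, rfl⟩ : ∃ q, n = 2 * q + 1 := ⟨n / 2, by omega⟩
        rw [hfodd q, show 2 * q + 1 + 1 = 2 * (q + 1) from by omega, hfeven (q + 1)]
        rw [Sym2.eq_swap]
        exact hcol (x (q + 1)) (hxmem (q + 1)) (T q) (hTgt q (q + 1) (by omega))

private lemma pathB (c : Sym2 ℕ → Fin 2) (j : Fin 2) (b tt : ℕ → ℕ)
    (hb : StrictMono b) (W : Set ℕ) (hW : W.Infinite)
    (hdisj : ∀ w ∈ W, w ∉ Set.range b)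
    (hcol : ∀ w ∈ W, ∀ k, tt w < b k → c s(w, b k) = j)
    (hpair : ∀ k k', k ≠ k' → c s(b k, b k') = j) :
    CarriesPath c j (W ∪ Set.range b) := by
  set w : ℕ → ℕ := fun n => Nat.nth (· ∈ W) n with hwdef
  have hwmem : ∀ n, w n ∈ W := fun n => Nat.nth_mem_of_infinite hW n
  have hwinj : Function.Injective w := Nat.nth_injective hW
  have hwrange : Set.range w = W := Nat.range_nth_of_infinite hW
  set M : ℕ → ℕ := fun m => (Finset.range (m + 2)).sup (fun n => tt (w n)) + m with hMdef
  set γ : ℕ → ℕ := fun m => 2 * M m + 1 with hγdef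
  have hγmono : StrictMono γ := by
    intro p q hpq
    have hsup : (Finset.range (p + 2)).sup (fun n => tt (w n)) ≤
        (Finset.range (q + 2)).sup (fun n => tt (w n)) :=
      Finset.sup_mono (Finset.range_subset_range.mpr (by omega))
    simp only [hγdef, hMdef]
    omega
  have hγinj : Function.Injective γ := hγmono.injective
  have hγodd : ∀ m, γ m % 2 = 1 := by
    intro m
    simp only [hγdef]
    omega
  have hcomp : {m | m ∉ Set.range γ}.Infinite := by
    apply Set.infinite_of_injective_forall_mem (f := fun k : ℕ => 2 * k)
    · intro p q h
      have h' : 2 * p = 2 * q := h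
      omega
    · rintro a ⟨m, hm⟩
      have := hγodd m
      omega
  set δ : ℕ → ℕ := fun n => Nat.nth (· ∉ Set.range γ) n with hδdef
  have hδmem : ∀ n, δ n ∉ Set.range γ := fun n => Nat.nth_mem_of_infinite hcomp n
  have hδinj : Function.Injective δ := Nat.nth_injective hcomp
  have hδrange : Set.range δ = {m | m ∉ Set.range γ} := Nat.range_nth_of_infinite hcomp
  have hMge : ∀ n m, n ≤ m + 1 → tt (w n) ≤ M m := by
    intro n m hnm
    have h1 : tt (w n) ≤ (Finset.range (m + 2)).sup (fun n => tt (w n)) :=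
      Finset.le_sup (f := fun n => tt (w n)) (Finset.mem_range.mpr (by omega))
    simp only [hMdef]
    omega
  have hguard : ∀ q, tt (w q) < b (γ (2 * q)) := by
    intro q
    have h1 := hMge q (2 * q) (by omega)
    have h2 : γ (2 * q) ≤ b (γ (2 * q)) := hb.le_apply
    have h3 : M (2 * q) < γ (2 * q) := by simp only [hγdef]; omega
    omega
  have hguard' : ∀ q, tt (w (q + 1)) < b (γ (2 * q + 1)) := by
    intro q
    have h1 := hMge (q + 1) (2 * q + 1) (by omega)
    have h2 : γ (2 * q + 1) ≤ b (γ (2 * q + 1)) := hb.le_apply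
    have h3 : M (2 * q + 1) < γ (2 * q + 1) := by simp only [hγdef]; omega
    omega
  set f : ℕ → ℕ := fun n =>
    if n % 4 = 0 then w (n / 4)
    else if n % 4 = 1 then b (γ (2 * (n / 4)))
    else if n % 4 = 2 then b (δ (n / 4))
    else b (γ (2 * (n / 4) + 1)) with hfdef
  have hf0 : ∀ q, f (4 * q) = w q := by
    intro q
    simp only [hfdef]
    rw [if_pos (by omega), show 4 * q / 4 = q by omega]
  have hf1 : ∀ q, f (4 * q + 1) = b (γ (2 * q)) := by
    intro q
    simp only [hfdef]
    rw [if_neg (by omega), if_pos (by omega), show (4 * q + 1) / 4 = q by omega]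
  have hf2 : ∀ q, f (4 * q + 2) = b (δ q) := by
    intro q
    simp only [hfdef]
    rw [if_neg (by omega), if_neg (by omega), if_pos (by omega),
      show (4 * q + 2) / 4 = q by omega]
  have hf3 : ∀ q, f (4 * q + 3) = b (γ (2 * q + 1)) := by
    intro q
    simp only [hfdef]
    rw [if_neg (by omega), if_neg (by omega), if_neg (by omega),
      show (4 * q + 3) / 4 = q by omega]
  have hWb : ∀ n k, w n ≠ b k := by
    intro n k h
    exact hdisj (w n) (hwmem n) ⟨k, h.symm⟩
  refine Or.inr ⟨f, ?_, ?_, ?_⟩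
  · intro p q h
    have hp : p % 4 = 0 ∨ p % 4 = 1 ∨ p % 4 = 2 ∨ p % 4 = 3 := by omega
    have hq : q % 4 = 0 ∨ q % 4 = 1 ∨ q % 4 = 2 ∨ q % 4 = 3 := by omega
    rcases hp with hp | hp | hp | hp <;> rcases hq with hq | hq | hq | hq <;>
      simp only [hfdef, hp, hq, reduceIte] at h
    · have := hwinj h; omega
    · exact absurd h (hWb _ _)
    · exact absurd h (hWb _ _)
    · exact absurd h (hWb _ _)
    · exact absurd h.symm (hWb _ _)
    · have := hγinj (hb.injective h); omega
    · exact absurd ⟨_, hb.injective h⟩ (hδmem (q / 4))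
    · have := hγinj (hb.injective h); omega
    · exact absurd h.symm (hWb _ _)
    · exact absurd ⟨_, (hb.injective h).symm⟩ (hδmem (p / 4))
    · have := hδinj (hb.injective h); omega
    · exact absurd ⟨_, (hb.injective h).symm⟩ (hδmem (p / 4))
    · exact absurd h.symm (hWb _ _)
    · have := hγinj (hb.injective h); omega
    · exact absurd ⟨_, hb.injective h⟩ (hδmem (q / 4))
    · have := hγinj (hb.injective h); omega
  · ext z
    simp only [Set.mem_range, Set.mem_union]
    constructor
    · rintro ⟨n, rfl⟩
      have hn : n % 4 = 0 ∨ n % 4 = 1 ∨ n % 4 = 2 ∨ n % 4 = 3 := by omega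
      rcases hn with hn | hn | hn | hn <;> simp only [hfdef, hn, reduceIte]
      · exact Or.inl (hwmem _)
      · exact Or.inr ⟨_, rfl⟩
      · exact Or.inr ⟨_, rfl⟩
      · exact Or.inr ⟨_, rfl⟩
    · rintro (hz | ⟨k, rfl⟩)
      · obtain ⟨n, rfl⟩ := hwrange ▸ hz
        exact ⟨4 * n, hf0 n⟩
      · by_cases hk : k ∈ Set.range γ
        · obtain ⟨p, rfl⟩ := hk
          have hp : p % 2 = 0 ∨ p % 2 = 1 := by omega
          rcases hp with hp | hp
          · obtain ⟨a, rfl⟩ : ∃ a, p = 2 * a := ⟨p / 2, by omega⟩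
            exact ⟨4 * a + 1, hf1 a⟩
          · obtain ⟨a, rfl⟩ : ∃ a, p = 2 * a + 1 := ⟨p / 2, by omega⟩
            exact ⟨4 * a + 3, hf3 a⟩
        · have : k ∈ Set.range δ := hδrange ▸ hk
          obtain ⟨a, rfl⟩ := this
          exact ⟨4 * a + 2, hf2 a⟩
  · intro n
    obtain ⟨q, hq⟩ : ∃ q, n = 4 * q ∨ n = 4 * q + 1 ∨ n = 4 * q + 2 ∨ n = 4 * q + 3 :=
      ⟨n / 4, by omega⟩
    rcases hq with rfl | rfl | rfl | rfl
    · rw [hf0 q, show 4 * q + 1 = 4 * q + 1 from rfl, hf1 q]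
      exact hcol (w q) (hwmem q) (γ (2 * q)) (hguard q)
    · rw [hf1 q, show 4 * q + 1 + 1 = 4 * q + 2 from by omega, hf2 q]
      exact hpair _ _ (fun he => hδmem q ⟨2 * q, he⟩)
    · rw [hf2 q, show 4 * q + 2 + 1 = 4 * q + 3 from by omega, hf3 q]
      exact hpair _ _ (fun he => hδmem q ⟨2 * q + 1, he.symm⟩)
    · rw [hf3 q, show 4 * q + 3 + 1 = 4 * (q + 1) from by omega, hf0 (q + 1)]
      rw [Sym2.eq_swap]
      exact hcol (w (q + 1)) (hwmem (q + 1)) (γ (2 * q + 1)) (hguard' q)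

/-- Erdős' theorem: for any 2-edge colouring of the complete graph on ℕ,
the vertices can be partitioned into a path of colour 0 and a path of colour 1. -/
theorem stmt3 (c : Sym2 ℕ → Fin 2) :
    ∃ P₀ P₁ : Set ℕ, Disjoint P₀ P₁ ∧ P₀ ∪ P₁ = Set.univ ∧
      CarriesPath c 0 P₀ ∧ CarriesPath c 1 P₁ := by
  obtain ⟨h, t, d, i, hmono, hclique, hthr⟩ := exists_endhom c
  set X : Set ℕ := {v | v ∉ Set.range h ∧ d v ≠ i} with hXdef
  set Y : Set ℕ := {v | v ∉ Set.range h ∧ d v = i} with hYdef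
  set bA : ℕ → ℕ := fun n => h (2 * n) with hbAdef
  have hbAmono : StrictMono bA := fun p q hpq => hmono (by omega)
  have hbAr : Set.range bA ⊆ Set.range h := by
    rintro z ⟨n, hn⟩
    exact ⟨2 * n, hn⟩
  obtain ⟨A, hAsub, hApath⟩ := pathA c (1 - i) bA t hbAmono X
    (fun x hx hxr => hx.1 (hbAr hxr))
    (fun x hx k hk => by
      rw [hthr x (bA k) (hbAr ⟨k, rfl⟩) hk]
      exact fin2_resolve (d x) i hx.2)
  have hAh : A ⊆ Set.range h := hAsub.trans hbAr
  set Bs : Set ℕ := Set.range h \ A with hBsdef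
  have hBsinf : Bs.Infinite := by
    apply Set.infinite_of_injective_forall_mem (f := fun n : ℕ => h (2 * n + 1))
    · intro p q hpq
      have := hmono.injective hpq
      omega
    · intro n
      refine ⟨⟨2 * n + 1, rfl⟩, ?_⟩
      intro hc
      obtain ⟨k, hk⟩ := hAsub hc
      have := hmono.injective hk
      omega
  set bB : ℕ → ℕ := fun n => Nat.nth (· ∈ Bs) n with hbBdef
  have hbBmono : StrictMono bB := Nat.nth_strictMono hBsinf
  have hbBmem : ∀ n, bB n ∈ Bs := fun n => Nat.nth_mem_of_infinite hBsinf n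
  have hbBrange : Set.range bB = Bs := Nat.range_nth_of_infinite hBsinf
  set W : Set ℕ := Y ∪ Set.range (fun n => bB (2 * n)) with hWdef
  set bR : ℕ → ℕ := fun n => bB (2 * n + 1) with hbRdef
  have hbRmono : StrictMono bR := fun p q hpq => hbBmono (by omega)
  have hWinf : W.Infinite := by
    apply Set.infinite_of_injective_forall_mem (f := fun n : ℕ => bB (2 * n))
    · intro p q hpq
      have := hbBmono.injective hpq
      omega
    · intro n
      exact Or.inr ⟨n, rfl⟩
  have hBclique : ∀ u v, u ∈ Bs → v ∈ Bs → u ≠ v → c s(u, v) = i :=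
    fun u v hu hv huv => hclique u v hu.1 hv.1 huv
  have hpath2 : CarriesPath c i (W ∪ Set.range bR) := by
    apply pathB c i bR t hbRmono W hWinf
    · rintro z hz ⟨k, hk⟩
      rcases hz with hY | ⟨n, hn⟩
      · exact hY.1 (hk ▸ (hbBmem (2 * k + 1)).1)
      · rw [← hk] at hn
        have := hbBmono.injective hn
        omega
    · intro z hz k hk
      rcases hz with hY | ⟨n, hn⟩
      · rw [hthr z (bR k) (hbBmem (2 * k + 1)).1 hk]
        exact hY.2
      · refine hBclique _ _ (hn ▸ hbBmem (2 * n)) (hbBmem (2 * k + 1)) ?_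
        rw [← hn]
        intro he
        have := hbBmono.injective he
        omega
    · intro k k' hkk'
      refine hBclique _ _ (hbBmem _) (hbBmem _) ?_
      intro he
      have := hbBmono.injective he
      omega
  have hWr : W ∪ Set.range bR = Y ∪ Bs := by
    ext z
    simp only [hWdef, Set.mem_union, Set.mem_range]
    constructor
    · rintro ((hz | ⟨n, rfl⟩) | ⟨n, rfl⟩)
      · exact Or.inl hz
      · exact Or.inr (hbBmem _)
      · exact Or.inr (hbBmem _)
    · rintro (hz | hz)
      · exact Or.inl (Or.inl hz)
      · obtain ⟨n, rfl⟩ := hbBrange ▸ hz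
        have hn : n % 2 = 0 ∨ n % 2 = 1 := by omega
        rcases hn with hn | hn
        · exact Or.inl (Or.inr ⟨n / 2, congrArg bB (by omega)⟩)
        · exact Or.inr ⟨n / 2, congrArg bB (by omega)⟩
  rw [hWr] at hpath2
  have hdisjXY : Disjoint (X ∪ A) (Y ∪ Bs) := by
    rw [Set.disjoint_left]
    rintro z (hz | hz) (hz' | hz')
    · exact hz.2 hz'.2
    · exact hz.1 hz'.1
    · exact hz'.1 (hAh hz)
    · exact hz'.2 hz
  have huniv : (X ∪ A) ∪ (Y ∪ Bs) = Set.univ := by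
    ext z
    simp only [Set.mem_union, Set.mem_univ, iff_true]
    by_cases hz : z ∈ Set.range h
    · by_cases hzA : z ∈ A
      · exact Or.inl (Or.inr hzA)
      · exact Or.inr (Or.inr ⟨hz, hzA⟩)
    · by_cases hd : d z = i
      · exact Or.inr (Or.inl ⟨hz, hd⟩)
      · exact Or.inl (Or.inl ⟨hz, hd⟩)
  rcases fin2_cases i with rfl | rfl
  · refine ⟨Y ∪ Bs, X ∪ A, hdisjXY.symm, ?_, hpath2, ?_⟩
    · rw [Set.union_comm]
      exact huniv
    · exact hApath
  · refine ⟨X ∪ A, Y ∪ Bs, hdisjXY, huniv, ?_, hpath2⟩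
    exact hApath
end

section
/- If P is a path (in Rado's sense) witnessed by a well ordering of order type ω₁, then the set A = {v ∈ V(P) : |N_P(v)| = ω₁} is uncountable, and moreover A is ω₁-unseparable in P: any two distinct vertices of A are joined by ω₁ many finite paths in P intersecting pairwise only in their endpoints. -/
open Cardinal

universe u

variable {V : Type u}

section Aux
variable {V : Type} {P : SimpleGraph V} {lt : V → V → Prop}

lemma aux_ctbl_Iio (wo : IsWellOrder V lt)
    (htype : @Ordinal.type V lt wo = (Cardinal.aleph 1).ord) (t : V) :
    {s | lt s t}.Countable := by
  haveI := wo
  rw [Cardinal.countable_iff_lt_aleph_one]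
  have h1 : #{s | lt s t} = ((Ordinal.typein lt).toRelEmbedding t).card :=
    Ordinal.card_typein t
  rw [h1, ← Cardinal.lt_ord, ← htype]
  exact Ordinal.typein_lt_type lt t

lemma aux_mkV (wo : IsWellOrder V lt)
    (htype : @Ordinal.type V lt wo = (Cardinal.aleph 1).ord) :
    Cardinal.mk V = Cardinal.aleph 1 := by
  haveI := wo
  have h := (Ordinal.card_type lt).symm
  rw [htype, Cardinal.card_ord] at h
  exact h

lemma aux_bounded (wo : IsWellOrder V lt)
    (htype : @Ordinal.type V lt wo = (Cardinal.aleph 1).ord)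
    {S : Set V} (hS : S.Countable) : ∃ b, ∀ s ∈ S, lt s b := by
  haveI := wo
  by_contra h
  push_neg at h
  have hsub : (Set.univ : Set V) ⊆ ⋃ s ∈ S, ({x | lt x s} ∪ {s}) := by
    intro b _
    obtain ⟨s, hsS, hns⟩ := h b
    refine Set.mem_biUnion hsS ?_
    rcases trichotomous_of lt b s with h1 | h1 | h1
    · exact Or.inl h1
    · exact Or.inr h1
    · exact absurd h1 hns
  have hV : (Set.univ : Set V).Countable :=
    Set.Countable.mono hsub
      (hS.biUnion fun s _ => (aux_ctbl_Iio wo htype s).union (Set.countable_singleton s))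
  have : Countable V := Set.countable_univ_iff.mp hV
  have h2 : #V ≤ Cardinal.aleph0 := Cardinal.mk_le_aleph0
  rw [aux_mkV wo htype] at h2
  exact absurd h2 (not_le.mpr Cardinal.aleph0_lt_aleph_one)

lemma aux_escape (wo : IsWellOrder V lt)
    (htype : @Ordinal.type V lt wo = (Cardinal.aleph 1).ord)
    {v : V} (hv : #(P.neighborSet v) = Cardinal.aleph 1) (b : V) :
    ∃ u, P.Adj v u ∧ ¬ lt u b := by
  haveI := wo
  by_contra h
  push_neg at h
  have hsub : P.neighborSet v ⊆ {s | lt s b} := fun u hu => h u hu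
  have hc : (P.neighborSet v).Countable := (aux_ctbl_Iio wo htype b).mono hsub
  rw [Cardinal.countable_iff_lt_aleph_one, hv] at hc
  exact lt_irrefl _ hc

lemma aux_up (wo : IsWellOrder V lt)
    (hcof : ∀ v x : V, lt x v → ∃ w : V, P.Adj w v ∧ lt w v ∧ ¬ lt w x) :
    ∀ z x : V, lt x z → ∃ p : P.Walk x z, p.IsPath ∧
      ∀ s ∈ p.support, ¬ lt s x ∧ ¬ lt z s := by
  haveI := wo
  intro z
  induction z using wo.wf.induction with
  | _ z IH =>
    intro x hxz
    obtain ⟨u, hadj, huz, hux⟩ := hcof z x hxz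
    have hasymm : ∀ {a c : V}, lt a c → ¬ lt c a := fun h1 h2 =>
      irrefl_of lt _ (trans_of lt h1 h2)
    by_cases hxu : u = x
    · subst hxu
      refine ⟨SimpleGraph.Walk.cons hadj SimpleGraph.Walk.nil, ?_, ?_⟩
      · refine SimpleGraph.Walk.IsPath.cons (SimpleGraph.Walk.IsPath.nil) ?_
        simp only [SimpleGraph.Walk.support_nil, List.mem_singleton]
        exact fun h => irrefl_of lt z (h ▸ hxz)
      · intro s hs
        simp only [SimpleGraph.Walk.support_cons, SimpleGraph.Walk.support_nil,
          List.mem_cons, List.mem_singleton] at hs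
        rcases hs with rfl | hs
        · exact ⟨irrefl_of lt s, hasymm hxz⟩
        · rcases hs with rfl | hs
          · exact ⟨hasymm hxz, irrefl_of lt s⟩
          · exact absurd hs List.not_mem_nil
    · have hxu' : lt x u := by
        rcases trichotomous_of lt x u with h1 | h1 | h1
        · exact h1
        · exact absurd h1.symm hxu
        · exact absurd h1 hux
      obtain ⟨q, hq, hsupp⟩ := IH u huz x hxu'
      have hznq : z ∉ q.support := fun hz => (hsupp z hz).2 huz
      refine ⟨q.concat hadj, ?_, ?_⟩
      · rw [← SimpleGraph.Walk.isPath_reverse_iff, SimpleGraph.Walk.reverse_concat]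
        refine SimpleGraph.Walk.IsPath.cons hq.reverse ?_
        rw [SimpleGraph.Walk.support_reverse, List.mem_reverse]
        exact hznq
      · intro s hs
        rw [SimpleGraph.Walk.support_concat, List.mem_append,
          List.mem_singleton] at hs
        rcases hs with hs | rfl
        · refine ⟨(hsupp s hs).1, fun hzs => (hsupp s hs).2 (trans_of lt huz hzs)⟩
        · exact ⟨hasymm (trans_of lt hxu' huz), irrefl_of lt s⟩

end Aux

section Aux2
variable {V : Type} {P : SimpleGraph V} {lt : V → V → Prop}

lemma aux_K (wo : IsWellOrder V lt)
    (htype : @Ordinal.type V lt wo = (Cardinal.aleph 1).ord)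
    (hcof : ∀ v x : V, lt x v → ∃ w : V, P.Adj w v ∧ lt w v ∧ ¬ lt w x)
    {v w : V} (hv : #(P.neighborSet v) = Cardinal.aleph 1)
    (hw : #(P.neighborSet w) = Cardinal.aleph 1) (hvw : v ≠ w)
    {S : Set V} (hS : S.Countable) :
    ∃ p : P.Walk v w, p.IsPath ∧ (∃ x ∈ p.support, x ∉ S ∧ x ≠ v ∧ x ≠ w) ∧
      ∀ x ∈ p.support, x = v ∨ x = w ∨ x ∉ S := by
  haveI := wo
  have hasymm : ∀ {a c : V}, lt a c → ¬ lt c a := fun h1 h2 =>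
    irrefl_of lt _ (trans_of lt h1 h2)
  obtain ⟨b, hb⟩ := aux_bounded wo htype (hS.union ((Set.countable_singleton w).insert v))
  obtain ⟨v', hv'adj, hv'b⟩ := aux_escape wo htype hv b
  obtain ⟨b2, hb2⟩ := aux_bounded wo htype (Set.countable_singleton v')
  obtain ⟨w', hw'adj, hw'b2⟩ := aux_escape wo htype hw b2
  -- everything in S ∪ {v, w} is below v'
  have hkey : ∀ x, x ∈ S ∪ {v, w} → lt x v' := by
    intro x hx
    rcases trichotomous_of lt b v' with h1 | h1 | h1
    · exact trans_of lt (hb x hx) h1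
    · exact h1 ▸ hb x hx
    · exact absurd h1 hv'b
  have hv'w' : lt v' w' := by
    have h1 : lt v' b2 := hb2 v' rfl
    rcases trichotomous_of lt b2 w' with h2 | h2 | h2
    · exact trans_of lt h1 h2
    · exact h2 ▸ h1
    · exact absurd h2 hw'b2
  obtain ⟨q, hq, hqsupp⟩ := aux_up wo hcof w' v' hv'w'
  have hmem_lt : ∀ x, x ∈ S ∪ {v, w} → x ∉ q.support := by
    intro x hx hxq
    exact (hqsupp x hxq).1 (hkey x hx)
  have hwns : w ∉ q.support := hmem_lt w (Or.inr (Or.inr rfl))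
  have hvns : v ∉ q.support := hmem_lt v (Or.inr (Or.inl rfl))
  refine ⟨SimpleGraph.Walk.cons hv'adj (q.concat hw'adj.symm), ?_, ?_, ?_⟩
  · refine SimpleGraph.Walk.IsPath.cons ?_ ?_
    · rw [← SimpleGraph.Walk.isPath_reverse_iff, SimpleGraph.Walk.reverse_concat]
      refine SimpleGraph.Walk.IsPath.cons hq.reverse ?_
      rw [SimpleGraph.Walk.support_reverse, List.mem_reverse]
      exact hwns
    · rw [SimpleGraph.Walk.support_concat, List.mem_append,
        List.mem_singleton]
      rintro (h1 | rfl)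
      · exact hvns h1
      · exact hvw rfl
  · refine ⟨v', ?_, ?_, ?_, ?_⟩
    · rw [SimpleGraph.Walk.support_cons]
      exact List.mem_cons_of_mem _ (by
        rw [SimpleGraph.Walk.support_concat, List.mem_append]
        exact Or.inl q.start_mem_support)
    · exact fun h => irrefl_of lt v' (hkey v' (Or.inl h))
    · exact fun h => irrefl_of lt v' (hkey v' (h ▸ Or.inr (Or.inl rfl)))
    · exact fun h => irrefl_of lt v' (hkey v' (h ▸ Or.inr (Or.inr rfl)))
  · intro x hx
    rw [SimpleGraph.Walk.support_cons, List.mem_cons, SimpleGraph.Walk.support_concat,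
      List.mem_append, List.mem_singleton] at hx
    rcases hx with rfl | hx | rfl
    · exact Or.inl rfl
    · exact Or.inr (Or.inr (fun hxS => hmem_lt x (Or.inl hxS) hx))
    · exact Or.inr (Or.inl rfl)

end Aux2

section Main
variable {V : Type} {P : SimpleGraph V} {lt : V → V → Prop}

/-- Part 1: the set of vertices of degree ℵ₁ is uncountable. -/
lemma aux_part1 (wo : IsWellOrder V lt)
    (htype : @Ordinal.type V lt wo = (Cardinal.aleph 1).ord)
    (hcof : ∀ v x : V, lt x v → ∃ w : V, P.Adj w v ∧ lt w v ∧ ¬ lt w x) :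
    ¬ ({v : V | #(P.neighborSet v) = Cardinal.aleph 1}).Countable := by
  haveI := wo
  intro hA
  obtain ⟨b, hb⟩ := aux_bounded wo htype hA
  -- every u not below b has countable neighbourhood
  have hctn : ∀ u, ¬ lt u b → (P.neighborSet u).Countable := by
    intro u hu
    rw [Cardinal.countable_iff_lt_aleph_one]
    rcases lt_or_ge #(P.neighborSet u) (Cardinal.aleph 1) with h | h
    · exact h
    · exfalso
      have hle : #(P.neighborSet u) ≤ Cardinal.aleph 1 :=
        (Cardinal.mk_set_le _).trans_eq (aux_mkV wo htype)
      exact hu (hb u (le_antisymm hle h))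
  -- the bounding function β
  have hβ : ∀ u : V, ∃ c, lt u c ∧ (¬ lt u b → ∀ x ∈ P.neighborSet u, lt x c) := by
    intro u
    by_cases h : lt u b
    · obtain ⟨c, hc⟩ := aux_bounded wo htype (Set.countable_singleton u)
      exact ⟨c, hc u rfl, fun h' => absurd h h'⟩
    · obtain ⟨c, hc⟩ := aux_bounded wo htype
        ((hctn u h).insert u)
      exact ⟨c, hc u (Set.mem_insert u _), fun _ x hx => hc x (Set.mem_insert_of_mem _ hx)⟩
  choose β hβ1 hβ2 using hβ
  -- the step function: bound β on an initial segment
  have hstep : ∀ d : V, ∃ e : V, lt d e ∧ ∀ x, (lt x d ∨ x = d) → lt (β x) e := by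
    intro d
    obtain ⟨e, he⟩ := aux_bounded wo htype
      ((((aux_ctbl_Iio wo htype d).insert d).image β).insert d)
    refine ⟨e, he d (Set.mem_insert d _), fun x hx => ?_⟩
    refine he (β x) (Set.mem_insert_of_mem _ ⟨x, ?_, rfl⟩)
    rcases hx with hx | rfl
    · exact Set.mem_insert_of_mem _ hx
    · exact Set.mem_insert x _
  choose nxt hnxt1 hnxt2 using hstep
  let γ : ℕ → V := fun n => Nat.rec b (fun _ d => nxt d) n
  have hγ0 : γ 0 = b := rfl
  have hγs : ∀ n, γ (n + 1) = nxt (γ n) := fun n => rfl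
  obtain ⟨δ', hδ'⟩ := aux_bounded wo htype (Set.countable_range γ)
  set U : Set V := {d | ∀ n, lt (γ n) d} with hU
  have hUne : U.Nonempty := ⟨δ', fun n => hδ' _ (Set.mem_range_self n)⟩
  set δ := wo.wf.min U hUne with hδdef
  have hδU : ∀ n, lt (γ n) δ := wo.wf.min_mem U hUne
  obtain ⟨u, huadj, huδ, hub⟩ := hcof δ b (hδU 0)
  have hnU : u ∉ U := fun hu => wo.wf.not_lt_min U hu huδ
  simp only [hU, Set.mem_setOf_eq, not_forall] at hnU
  obtain ⟨n, hn⟩ := hnU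
  have hule : lt u (γ n) ∨ u = γ n := by
    rcases trichotomous_of lt u (γ n) with h1 | h1 | h1
    · exact Or.inl h1
    · exact Or.inr h1
    · exact absurd h1 hn
  have h1 : lt (β u) (γ (n + 1)) := by rw [hγs]; exact hnxt2 (γ n) u hule
  have h2 : lt (β u) δ := trans_of lt h1 (hδU (n + 1))
  have h3 : lt δ (β u) := hβ2 u hub δ huadj
  exact irrefl_of lt _ (trans_of lt h2 h3)

end Main

section Part2
variable {V : Type} {P : SimpleGraph V} {lt : V → V → Prop}

lemma aux_part2 (wo : IsWellOrder V lt)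
    (htype : @Ordinal.type V lt wo = (Cardinal.aleph 1).ord)
    (hcof : ∀ v x : V, lt x v → ∃ w : V, P.Adj w v ∧ lt w v ∧ ¬ lt w x) :
    Unseparable P {v : V | #(P.neighborSet v) = Cardinal.aleph 1} (Cardinal.aleph 1) := by
  haveI := wo
  intro v hv w hw hvw
  simp only [Set.mem_setOf_eq] at hv hw
  have key : ∀ S : Set V, S.Countable →
      ∃ p : P.Walk v w, p.IsPath ∧ (∃ x ∈ p.support, x ∉ S ∧ x ≠ v ∧ x ≠ w) ∧
        ∀ x ∈ p.support, x = v ∨ x = w ∨ x ∉ S :=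
    fun S hS => aux_K wo htype hcof hv hw hvw hS
  have hSct : ∀ (t : V) (IH : ∀ s, lt s t → P.Walk v w),
      (({v, w} ∪ ⋃ s : {s // lt s t}, {x | x ∈ (IH s s.2).support}) : Set V).Countable := by
    intro t IH
    refine Set.Countable.union ((Set.countable_singleton w).insert v) ?_
    haveI : Countable {s // lt s t} := (aux_ctbl_Iio wo htype t).to_subtype
    exact Set.countable_iUnion fun s => ((IH s s.2).support.finite_toSet).countable
  let F : ∀ t : V, (∀ s, lt s t → P.Walk v w) → P.Walk v w := fun t IH =>
    (key ({v, w} ∪ ⋃ s : {s // lt s t}, {x | x ∈ (IH s s.2).support}) (hSct t IH)).choose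
  let g : V → P.Walk v w := wo.wf.fix F
  have hgt : ∀ t, g t = F t (fun s _ => g s) := fun t => wo.wf.fix_eq F t
  set Sf : V → Set V := fun t =>
    {v, w} ∪ ⋃ s : {s // lt s t}, {x | x ∈ (g s).support} with hSf
  have hspec : ∀ t, (g t).IsPath ∧ (∃ x ∈ (g t).support, x ∉ Sf t ∧ x ≠ v ∧ x ≠ w) ∧
      ∀ x ∈ (g t).support, x = v ∨ x = w ∨ x ∉ Sf t := by
    intro t
    rw [hgt t]
    exact (key (Sf t) (hSct t (fun s _ => g s))).choose_spec
  have hsub : ∀ s t : V, lt s t → ∀ x ∈ (g s).support, x ∈ Sf t := by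
    intro s t hst x hx
    exact Or.inr (Set.mem_iUnion.mpr ⟨⟨s, hst⟩, hx⟩)
  have hdisj : ∀ s t : V, lt s t → IntDisjoint (g s) (g t) := by
    intro s t hst x hxs hxt
    rcases (hspec t).2.2 x hxt with h | h | h
    · exact Or.inl h
    · exact Or.inr h
    · exact absurd (hsub s t hst x hxs) h
  have hginj : Function.Injective g := by
    intro s t hst
    by_contra hne
    rcases trichotomous_of lt s t with h | h | h
    · obtain ⟨x, hxsupp, hxS, _, _⟩ := (hspec t).2.1
      exact hxS (hsub s t h x (hst ▸ hxsupp))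
    · exact hne h
    · obtain ⟨x, hxsupp, hxS, _, _⟩ := (hspec s).2.1
      exact hxS (hsub t s h x (hst ▸ hxsupp))
  let Pa : V → P.Path v w := fun t => ⟨g t, (hspec t).1⟩
  have hPainj : Function.Injective Pa := fun s t h =>
    hginj (congrArg Subtype.val h)
  refine ⟨Set.range Pa, ?_, ?_⟩
  · rw [Cardinal.mk_range_eq Pa hPainj, aux_mkV wo htype]
  · rintro p ⟨s, rfl⟩ q ⟨t, rfl⟩ hpq
    have hst : s ≠ t := fun h => hpq (congrArg Pa h)
    rcases trichotomous_of lt s t with h | h | h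
    · exact hdisj s t h
    · exact absurd h hst
    · intro x hxs hxt
      exact hdisj t s h x hxt hxs

end Part2

/-- In a Rado path of order type ω₁, the set of vertices of degree ω₁ is
uncountable and ω₁-unseparable. -/
theorem stmt6 {V : Type} (P : SimpleGraph V) (lt : V → V → Prop)
    (wo : IsWellOrder V lt)
    (htype : @Ordinal.type V lt wo = (Cardinal.aleph 1).ord)
    (hcof : ∀ v x : V, lt x v → ∃ w : V, P.Adj w v ∧ lt w v ∧ ¬ lt w x) :
    ¬ ({v : V | #(P.neighborSet v) = Cardinal.aleph 1}).Countable ∧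
    Unseparable P {v : V | #(P.neighborSet v) = Cardinal.aleph 1}
      (Cardinal.aleph 1) := by
  exact ⟨aux_part1 wo htype hcof, aux_part2 wo htype hcof⟩
end

section
/- Let κ be an infinite cardinal and G a graph of type H_{κ,κ} with main class V(G) (i.e., V(G) = {a_ξ : ξ < κ} and there is an injective enumeration {b_ξ : ξ < κ} of a subset B ⊆ V(G) such that {a_ξ, b_ζ} is an edge whenever ξ ≤ ζ < κ). Then G contains an induced subgraph G' on κ vertices which is κ-complete, i.e., |V(G') \ N_{G'}(x)| < κ for all x ∈ V(G'). Conversely, every κ-complete graph of size κ is of type H_{κ,κ} with main class its full vertex set. -/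
open Cardinal

universe u

variable {V : Type u}

namespace Stmt8Aux

theorem lt_add_one_iff' {a b : Ordinal.{u}} : a < b + 1 ↔ a ≤ b := by
  rw [Ordinal.add_one_eq_succ]
  exact Order.lt_succ_iff


/-- The ordinal coded by an element of `o.ToType`. -/
noncomputable def ot {o : Ordinal.{u}} (t : o.ToType) : Ordinal.{u} :=
  ((Ordinal.ToType.mk (o := o)).symm t : Set.Iio o).1

theorem ot_lt {o : Ordinal.{u}} (t : o.ToType) : ot t < o :=
  ((Ordinal.ToType.mk (o := o)).symm t).2

theorem ot_inj {o : Ordinal.{u}} : Function.Injective (ot (o := o)) := by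
  intro a b h
  have := (Ordinal.ToType.mk (o := o)).symm.injective (Subtype.ext h)
  exact this

theorem ot_surj {o : Ordinal.{u}} {ξ : Ordinal.{u}} (h : ξ < o) : ∃ t : o.ToType, ot t = ξ :=
  ⟨Ordinal.ToType.mk (o := o) ⟨ξ, h⟩, by simp [ot]⟩

theorem image_Iio_eq_range (f : Ordinal.{u} → V) (o : Ordinal.{u}) :
    f '' Set.Iio o = Set.range (fun t : o.ToType => f (ot t)) := by
  ext v
  constructor
  · rintro ⟨ξ, hξ, rfl⟩
    obtain ⟨t, rfl⟩ := ot_surj hξ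
    exact ⟨t, rfl⟩
  · rintro ⟨t, rfl⟩
    exact ⟨ot t, ot_lt t, rfl⟩

theorem mk_image_Iio_le (f : Ordinal.{u} → V) (o : Ordinal.{u}) :
    #(f '' Set.Iio o) ≤ o.card := by
  rw [image_Iio_eq_range]
  exact Cardinal.mk_range_le.trans (by rw [Cardinal.mk_toType])

theorem mk_image_Iio_eq (f : Ordinal.{u} → V) (o : Ordinal.{u})
    (hf : Set.InjOn f (Set.Iio o)) : #(f '' Set.Iio o) = o.card := by
  rw [image_Iio_eq_range, Cardinal.mk_range_eq, Cardinal.mk_toType]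
  intro s t h
  exact ot_inj (hf (ot_lt s) (ot_lt t) h)

/-- An element of `S` minimizing `f`. -/
noncomputable def minOn (f : V → Ordinal.{u}) (S : Set V) (h : S.Nonempty) : V :=
  ((Set.mem_image f S _).mp (csInf_mem (h.image f))).choose

theorem minOn_mem (f : V → Ordinal.{u}) (S : Set V) (h : S.Nonempty) : minOn f S h ∈ S :=
  ((Set.mem_image f S _).mp (csInf_mem (h.image f))).choose_spec.1

theorem minOn_le (f : V → Ordinal.{u}) (S : Set V) (h : S.Nonempty) {v : V} (hv : v ∈ S) :
    f (minOn f S h) ≤ f v := by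
  have spec := ((Set.mem_image f S _).mp (csInf_mem (h.image f))).choose_spec
  unfold minOn
  rw [spec.2]
  exact csInf_le (OrderBot.bddBelow _) ⟨v, hv, rfl⟩

/-- The size (as an ordinal) of the set of non-neighbours of `v`. -/
noncomputable def gfun (G : SimpleGraph V) (v : V) : Ordinal.{u} :=
  (#{w : V | ¬ G.Adj v w}).ord

section Rec

variable (G : SimpleGraph V) [Nonempty V] (idx : V → Ordinal.{u})

/-- The candidate set at stage `ζ`: unused vertices with few non-neighbours. -/
def candA (ζ : Ordinal.{u}) (U : Set V) : Set V := {v | v ∈ U ∧ gfun G v ≤ ζ}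

/-- The choice made at stage `ζ` of the enumeration of the vertices. -/
noncomputable def pickA (ζ : Ordinal.{u}) (U : Set V) : V :=
  letI := Classical.propDecidable
  if h : (candA G ζ U).Nonempty then minOn idx _ h
  else if h2 : U.Nonempty then minOn (gfun G) U h2
  else Classical.arbitrary V

theorem pickA_mem {ζ : Ordinal.{u}} {U : Set V} (hU : U.Nonempty) : pickA G idx ζ U ∈ U := by
  unfold pickA
  split_ifs with h
  · exact (minOn_mem idx _ h).1
  · exact minOn_mem _ _ hU

/-- The enumeration of the vertices of `G` obtained by transfinite recursion,
always choosing (if possible) an unused vertex with few non-neighbours, of minimal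
index. -/
noncomputable def seqA : Ordinal.{u} → V :=
  Ordinal.lt_wf.fix (fun ζ ih => pickA G idx ζ {v | ∀ ξ (h : ξ < ζ), ih ξ h ≠ v})

/-- The set of vertices unused before stage `ζ`. -/
def UA (ζ : Ordinal.{u}) : Set V := {v | ∀ ξ, ξ < ζ → seqA G idx ξ ≠ v}

theorem seqA_eq (ζ : Ordinal.{u}) : seqA G idx ζ = pickA G idx ζ (UA G idx ζ) :=
  WellFounded.fix_eq _ _ _

theorem UA_antitone {ξ ζ : Ordinal.{u}} (h : ξ ≤ ζ) : UA G idx ζ ⊆ UA G idx ξ :=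
  fun _ hv ξ' hξ' => hv ξ' (hξ'.trans_le h)

theorem seqA_mem {ζ : Ordinal.{u}} (hU : (UA G idx ζ).Nonempty) :
    seqA G idx ζ ∈ UA G idx ζ := by
  rw [seqA_eq]; exact pickA_mem G idx hU

theorem seqA_cases {ζ : Ordinal.{u}} (hU : (UA G idx ζ).Nonempty) :
    (gfun G (seqA G idx ζ) ≤ ζ) ∨
    (∀ v ∈ UA G idx ζ, gfun G (seqA G idx ζ) ≤ gfun G v) := by
  rw [seqA_eq]
  unfold pickA
  split_ifs with h
  · left
    exact (minOn_mem idx _ h).2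
  · right
    exact fun v hv => minOn_le (gfun G) _ hU hv

theorem seqA_minIdx {ζ : Ordinal.{u}} (h : (candA G ζ (UA G idx ζ)).Nonempty) :
    ∀ v ∈ candA G ζ (UA G idx ζ), idx (seqA G idx ζ) ≤ idx v := by
  rw [seqA_eq]
  unfold pickA
  rw [dif_pos h]
  exact fun v hv => minOn_le idx _ h hv

end Rec

section Main

variable {G : SimpleGraph V} {κ : Cardinal.{u}} {idx : V → Ordinal.{u}}

theorem UA_nonempty [Nonempty V] (hκ : ℵ₀ ≤ κ) (hV : #V = κ) {ζ : Ordinal.{u}}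
    (hζ : ζ < κ.ord) : (UA G idx ζ).Nonempty := by
  by_contra h
  rw [Set.not_nonempty_iff_eq_empty] at h
  have hsub : (Set.univ : Set V) ⊆ seqA G idx '' Set.Iio ζ := by
    intro v _
    by_contra hv
    have : v ∈ UA G idx ζ := by
      intro ξ hξ he
      exact hv ⟨ξ, hξ, he⟩
    rw [h] at this
    exact this
  have h1 : κ ≤ ζ.card := by
    calc κ = #V := hV.symm
    _ = #(Set.univ : Set V) := Cardinal.mk_univ.symm
    _ ≤ #(seqA G idx '' Set.Iio ζ) := Cardinal.mk_le_mk_of_subset hsub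
    _ ≤ ζ.card := mk_image_Iio_le _ _
  exact absurd (Cardinal.lt_ord.mp hζ) (not_lt.mpr h1)

theorem seqA_injOn [Nonempty V] (hκ : ℵ₀ ≤ κ) (hV : #V = κ) :
    Set.InjOn (seqA G idx) (Set.Iio κ.ord) := by
  have key : ∀ ξ ζ : Ordinal.{u}, ξ < ζ → ζ < κ.ord → seqA G idx ξ ≠ seqA G idx ζ := by
    intro ξ ζ hlt hζ h
    exact seqA_mem G idx (UA_nonempty hκ hV hζ) ξ hlt h
  intro ξ hξ ζ hζ h
  rcases lt_trichotomy ξ ζ with h' | h' | h'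
  · exact absurd h (key ξ ζ h' hζ)
  · exact h'
  · exact absurd h.symm (key ζ ξ h' hξ)

theorem gfun_lt (hcomp : ∀ x : V, #{v : V | ¬ G.Adj x v} < κ) (v : V) :
    gfun G v < κ.ord :=
  Cardinal.ord_lt_ord.mpr (hcomp v)

/-- Boundedness of the non-neighbour counts along any initial segment. -/
theorem seqA_gbound [Nonempty V] (hκ : ℵ₀ ≤ κ) (hV : #V = κ)
    (hcomp : ∀ x : V, #{v : V | ¬ G.Adj x v} < κ) {ζ : Ordinal.{u}} (hζ : ζ < κ.ord) :
    ∃ β : Ordinal.{u}, β < κ.ord ∧ ∀ ξ, ξ ≤ ζ → gfun G (seqA G idx ξ) ≤ β := by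
  obtain ⟨w, hw⟩ := UA_nonempty (G := G) (idx := idx) hκ hV hζ
  refine ⟨max ζ (gfun G w), max_lt hζ (gfun_lt hcomp w), fun ξ hξ => ?_⟩
  have hξκ : ξ < κ.ord := lt_of_le_of_lt hξ hζ
  rcases seqA_cases G idx (UA_nonempty hκ hV hξκ) with h1 | h2
  · exact le_max_of_le_left (h1.trans hξ)
  · exact le_max_of_le_right (h2 w (UA_antitone G idx hξ hw))

theorem seqA_surj [Nonempty V] (hκ : ℵ₀ ≤ κ) (hV : #V = κ)
    (hcomp : ∀ x : V, #{v : V | ¬ G.Adj x v} < κ)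
    (hidx : Function.Injective idx) (hidxlt : ∀ v, idx v < κ.ord) (v : V) :
    ∃ ζ, ζ < κ.ord ∧ seqA G idx ζ = v := by
  by_contra hv
  push_neg at hv
  have hmem : ∀ ζ, ζ < κ.ord → v ∈ UA G idx ζ := by
    intro ζ hζ ξ hξ he
    exact hv ξ (hξ.trans hζ) he
  have hg : gfun G v < κ.ord := gfun_lt hcomp v
  have key : ∀ ζ, gfun G v ≤ ζ → ζ < κ.ord → idx (seqA G idx ζ) ≤ idx v := by
    intro ζ h1 h2
    exact seqA_minIdx G idx ⟨v, hmem ζ h2, h1⟩ v ⟨hmem ζ h2, h1⟩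
  -- the stages `gfun G v + ot t`, `t : κ.ord.ToType`, give κ-many distinct vertices
  -- of index `≤ idx v`, but there are fewer than κ such vertices.
  have hstage : ∀ t : κ.ord.ToType, gfun G v + ot t < κ.ord := by
    intro t
    rw [Cardinal.lt_ord, Ordinal.card_add]
    exact Cardinal.add_lt_of_lt hκ (Cardinal.lt_ord.mp hg) (Cardinal.lt_ord.mp (ot_lt t))
  set T := {w : V | idx w ≤ idx v} with hT
  have hφ : ∀ t : κ.ord.ToType, seqA G idx (gfun G v + ot t) ∈ T := by
    intro t
    exact key _ (le_self_add) (hstage t)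
  have hinj : Function.Injective (fun t : κ.ord.ToType =>
      (⟨seqA G idx (gfun G v + ot t), hφ t⟩ : T)) := by
    intro s t h
    have h' : seqA G idx (gfun G v + ot s) = seqA G idx (gfun G v + ot t) :=
      congrArg Subtype.val h
    have := seqA_injOn (G := G) (idx := idx) hκ hV (hstage s) (hstage t) h'
    exact ot_inj (add_left_cancel_iff.mp this)
  have hbig : κ ≤ #T := by
    calc κ = (κ.ord).card := (Cardinal.card_ord κ).symm
    _ = #(κ.ord.ToType) := (Cardinal.mk_toType _).symm
    _ ≤ #T := Cardinal.mk_le_of_injective hinj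
  have hsmall : #T < κ := by
    have hlt : idx v + 1 < κ.ord := by
      rw [Ordinal.add_one_eq_succ]
      exact (Cardinal.isSuccLimit_ord hκ).succ_lt (hidxlt v)
    have hinj2 : Function.Injective (fun w : T =>
        Ordinal.ToType.mk (o := idx v + 1)
          ⟨idx w.1, lt_add_one_iff'.mpr w.2⟩) := by
      intro s t h
      have := (Ordinal.ToType.mk (o := idx v + 1)).injective h
      exact Subtype.ext (hidx (congrArg Subtype.val this))
    calc #T ≤ #((idx v + 1).ToType) := Cardinal.mk_le_of_injective hinj2
    _ = (idx v + 1).card := Cardinal.mk_toType _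
    _ < κ := Cardinal.lt_ord.mp hlt
  exact absurd hbig (not_le.mpr hsmall)

end Main

section RecB

variable (G : SimpleGraph V) [Nonempty V] (a : Ordinal.{u} → V)

/-- The second enumeration: `seqB ζ` is a fresh common neighbour of all `a ξ`, `ξ ≤ ζ`. -/
noncomputable def seqB : Ordinal.{u} → V :=
  Ordinal.lt_wf.fix (fun ζ ih =>
    letI := Classical.propDecidable
    if h : {v : V | (∀ ξ, ξ ≤ ζ → G.Adj (a ξ) v) ∧ ∀ ξ (hξ : ξ < ζ), ih ξ hξ ≠ v}.Nonempty
    then h.choose else Classical.arbitrary V)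

/-- The set of good choices at stage `ζ` of the second enumeration. -/
def goodB (ζ : Ordinal.{u}) : Set V :=
  {v : V | (∀ ξ, ξ ≤ ζ → G.Adj (a ξ) v) ∧ ∀ ξ, ξ < ζ → seqB G a ξ ≠ v}

open Classical in
theorem seqB_eq (ζ : Ordinal.{u}) :
    seqB G a ζ = if h : (goodB G a ζ).Nonempty then h.choose else Classical.arbitrary V :=
  WellFounded.fix_eq _ _ _

theorem seqB_mem {ζ : Ordinal.{u}} (h : (goodB G a ζ).Nonempty) :
    seqB G a ζ ∈ goodB G a ζ := by
  rw [seqB_eq, dif_pos h]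
  exact h.choose_spec

variable {G a}

theorem goodB_nonempty {κ : Cardinal.{u}} (hκ : ℵ₀ ≤ κ) (hV : #V = κ)
    {ζ : Ordinal.{u}} (hζ : ζ < κ.ord) {β : Ordinal.{u}} (hβ : β < κ.ord)
    (hb : ∀ ξ, ξ ≤ ζ → gfun G (a ξ) ≤ β) : (goodB G a ζ).Nonempty := by
  by_contra h
  rw [Set.not_nonempty_iff_eq_empty] at h
  -- every vertex is a non-neighbour of some `a ξ`, `ξ ≤ ζ`, or a previous value of `seqB`
  set Bad1 : Set V := ⋃ t : (ζ + 1).ToType, {v : V | ¬ G.Adj (a (ot t)) v} with hB1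
  set Bad2 : Set V := seqB G a '' Set.Iio ζ with hB2
  have hcover : (Set.univ : Set V) ⊆ Bad1 ∪ Bad2 := by
    intro v _
    by_contra hv
    rw [Set.mem_union] at hv
    push_neg at hv
    have hv1 : ∀ ξ, ξ ≤ ζ → G.Adj (a ξ) v := by
      intro ξ hξ
      by_contra hadj
      obtain ⟨t, ht⟩ := ot_surj (o := ζ + 1) (ξ := ξ) (lt_add_one_iff'.mpr hξ)
      exact hv.1 (Set.mem_iUnion.mpr ⟨t, by rw [ht]; exact hadj⟩)
    have hv2 : ∀ ξ, ξ < ζ → seqB G a ξ ≠ v := by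
      intro ξ hξ he
      exact hv.2 ⟨ξ, hξ, he⟩
    have : v ∈ goodB G a ζ := ⟨hv1, hv2⟩
    rw [h] at this
    exact this
  have hζ1 : ζ + 1 < κ.ord := by
    rw [Ordinal.add_one_eq_succ]
    exact (Cardinal.isSuccLimit_ord hκ).succ_lt hζ
  have hBad1 : #Bad1 < κ := by
    have hle : #Bad1 ≤ #((ζ + 1).ToType) * ⨆ t : (ζ + 1).ToType,
        #{v : V | ¬ G.Adj (a (ot t)) v} := Cardinal.mk_iUnion_le _
    have hsup : (⨆ t : (ζ + 1).ToType, #{v : V | ¬ G.Adj (a (ot t)) v}) ≤ β.card := by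
      apply ciSup_le'
      intro t
      have h1 : ot t ≤ ζ := lt_add_one_iff'.mp (ot_lt t)
      exact Cardinal.ord_le.mp (hb (ot t) h1)
    calc #Bad1 ≤ #((ζ + 1).ToType) * β.card := hle.trans (by
          exact mul_le_mul_right hsup _)
    _ = (ζ + 1).card * β.card := by rw [Cardinal.mk_toType]
    _ < κ := Cardinal.mul_lt_of_lt hκ (Cardinal.lt_ord.mp hζ1) (Cardinal.lt_ord.mp hβ)
  have hBad2 : #Bad2 < κ := lt_of_le_of_lt (mk_image_Iio_le _ _) (Cardinal.lt_ord.mp hζ)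
  have : κ ≤ #(Bad1 ∪ Bad2 : Set V) := by
    calc κ = #V := hV.symm
    _ = #(Set.univ : Set V) := Cardinal.mk_univ.symm
    _ ≤ _ := Cardinal.mk_le_mk_of_subset hcover
  exact absurd (lt_of_le_of_lt this (lt_of_le_of_lt (Cardinal.mk_union_le _ _)
    (Cardinal.add_lt_of_lt hκ hBad1 hBad2))) (lt_irrefl κ)

end RecB

end Stmt8Aux

/-- Graphs of type H_{κ,κ} with main class the whole vertex set contain
κ-complete induced subgraphs on κ vertices; conversely every κ-complete graph of size κ
is of type H_{κ,κ} with main class its vertex set. -/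
theorem stmt8 {V : Type u} (κ : Cardinal.{u}) (hκ : ℵ₀ ≤ κ) (G : SimpleGraph V) :
    (IsHType G κ Set.univ → ∃ S : Set V, #S = κ ∧ KComplete (G.induce S) κ) ∧
    (#V = κ → KComplete G κ → IsHType G κ Set.univ) := by
  constructor
  · -- type H_{κ,κ} with main class everything implies a κ-complete induced subgraph
    rintro ⟨B, a, b, hainj, hbinj, haim, hbim, hadj⟩
    have hcardS : #(b '' Set.Iio κ.ord : Set V) = κ := by
      rw [Stmt8Aux.mk_image_Iio_eq _ _ hbinj, Cardinal.card_ord]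
    refine ⟨b '' Set.Iio κ.ord, hcardS, hcardS.ge, ?_⟩
    intro x
    have hx : (x : V) ∈ a '' Set.Iio κ.ord := by rw [haim]; exact Set.mem_univ _
    obtain ⟨ξ₀, hξ₀, hax⟩ := hx
    have hsub : ∀ v : ↥(b '' Set.Iio κ.ord),
        ¬ (G.induce (b '' Set.Iio κ.ord)).Adj x v → (v : V) ∈ b '' Set.Iio ξ₀ := by
      intro v hv
      obtain ⟨ζ, hζ, hbv⟩ := v.2
      refine ⟨ζ, ?_, hbv⟩
      by_contra hlt
      rw [Set.mem_Iio, not_lt] at hlt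
      apply hv
      have h := hadj ξ₀ ζ hlt hζ
      rw [hax, hbv] at h
      exact h
    have hinj : Function.Injective
        (fun v : {v : ↥(b '' Set.Iio κ.ord) | ¬ (G.induce (b '' Set.Iio κ.ord)).Adj x v} =>
          (⟨v.1.1, hsub v.1 v.2⟩ : ↥(b '' Set.Iio ξ₀))) := by
      intro s t h
      simp only [Subtype.mk.injEq] at h
      exact Subtype.ext (Subtype.ext h)
    calc #{v : ↥(b '' Set.Iio κ.ord) | ¬ (G.induce (b '' Set.Iio κ.ord)).Adj x v}
        ≤ #(b '' Set.Iio ξ₀ : Set V) := Cardinal.mk_le_of_injective hinj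
    _ ≤ ξ₀.card := Stmt8Aux.mk_image_Iio_le _ _
    _ < κ := Cardinal.lt_ord.mp hξ₀
  · -- a κ-complete graph on κ vertices is of type H_{κ,κ}
    intro hV hcomp
    obtain ⟨hle, hsmall⟩ := hcomp
    haveI : Nonempty V := Cardinal.mk_ne_zero_iff.mp
      (by rw [hV]; exact (Cardinal.aleph0_pos.trans_le hκ).ne')
    have hVcard : #V = #(κ.ord.ToType) := by
      rw [Cardinal.mk_toType, Cardinal.card_ord, hV]
    obtain ⟨e⟩ := Cardinal.eq.mp hVcard
    set idx : V → Ordinal.{u} := fun v => Stmt8Aux.ot (e v) with hidxdef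
    have hidx : Function.Injective idx := fun s t h => e.injective (Stmt8Aux.ot_inj h)
    have hidxlt : ∀ v, idx v < κ.ord := fun v => Stmt8Aux.ot_lt _
    set a := Stmt8Aux.seqA G idx with ha
    have hainj : Set.InjOn a (Set.Iio κ.ord) := Stmt8Aux.seqA_injOn hκ hV
    have haim : a '' Set.Iio κ.ord = Set.univ := by
      apply Set.eq_univ_of_forall
      intro v
      obtain ⟨ζ, h1, h2⟩ := Stmt8Aux.seqA_surj hκ hV hsmall hidx hidxlt v
      exact ⟨ζ, h1, h2⟩
    set b := Stmt8Aux.seqB G a with hb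
    have hbmem : ∀ ζ, ζ < κ.ord → b ζ ∈ Stmt8Aux.goodB G a ζ := by
      intro ζ hζ
      obtain ⟨β, hβ, hgb⟩ := Stmt8Aux.seqA_gbound hκ hV hsmall hζ
      exact Stmt8Aux.seqB_mem _ _ (Stmt8Aux.goodB_nonempty hκ hV hζ hβ hgb)
    have hbinj : Set.InjOn b (Set.Iio κ.ord) := by
      have key : ∀ ξ ζ : Ordinal.{u}, ξ < ζ → ζ < κ.ord → b ξ ≠ b ζ := by
        intro ξ ζ hlt hζ h
        exact (hbmem ζ hζ).2 ξ hlt h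
      intro ξ hξ ζ hζ h
      rcases lt_trichotomy ξ ζ with h' | h' | h'
      · exact absurd h (key ξ ζ h' hζ)
      · exact h'
      · exact absurd h.symm (key ζ ξ h' hξ)
    refine ⟨b '' Set.Iio κ.ord, a, b, hainj, hbinj, haim, rfl, ?_⟩
    intro ξ ζ hξζ hζ
    exact (hbmem ζ hζ).1 ξ hξζ
end
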